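/- Let H≤3 be the set of natural numbers expressible as u₁ + ⋯ + u_ℓ with 1 ≤ ℓ ≤ 3, where each uᵢ is a power of 2 (including 2⁰ = 1) and the uᵢ are pairwise coprime. Then H≤3 = {1, 2} · {2^β : β ≥ 0} ∪ {1,2} · {2^β + 1 : β ≥ 0}, i.e., H≤3 = B · C with B = {1,2} and C = {2^β : β ≥ 0} ∪ {2^β + 1 : β ≥ 0}. -/

import Mathlib

open Pointwise

lemma pow2_coprime {a b : ℕ} (h : Nat.Coprime (2^a) (2^b)) : a = 0 ∨ b = 0 := by
  by_contra hc
  push_neg at hc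
  obtain ⟨ha, hb⟩ := hc
  have h2 : (2:ℕ) ∣ Nat.gcd (2^a) (2^b) :=
    Nat.dvd_gcd (dvd_pow_self 2 ha) (dvd_pow_self 2 hb)
  have h1 : (2:ℕ) ∣ 1 := h ▸ h2
  norm_num at h1

lemma mem_rhs_pow (β : ℕ) : (2^β : ℕ) ∈ ({1, 2} : Set ℕ) *
    ({n : ℕ | ∃ β : ℕ, n = 2 ^ β} ∪ {n : ℕ | ∃ β : ℕ, n = 2 ^ β + 1}) := by
  rw [show (2^β : ℕ) = 1 * 2^β from (one_mul _).symm]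
  exact Set.mul_mem_mul (by simp) (Set.mem_union_left _ ⟨β, rfl⟩)

lemma mem_rhs_succ (β : ℕ) : (2^β + 1 : ℕ) ∈ ({1, 2} : Set ℕ) *
    ({n : ℕ | ∃ β : ℕ, n = 2 ^ β} ∪ {n : ℕ | ∃ β : ℕ, n = 2 ^ β + 1}) := by
  rw [show (2^β + 1 : ℕ) = 1 * (2^β + 1) from (one_mul _).symm]
  exact Set.mul_mem_mul (by simp) (Set.mem_union_right _ ⟨β, rfl⟩)

lemma mem_rhs_plus2 (e : ℕ) : (2^e + 2 : ℕ) ∈ ({1, 2} : Set ℕ) *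
    ({n : ℕ | ∃ β : ℕ, n = 2 ^ β} ∪ {n : ℕ | ∃ β : ℕ, n = 2 ^ β + 1}) := by
  cases e with
  | zero =>
    rw [show (2^0 + 2 : ℕ) = 1 * (2^1 + 1) by norm_num]
    exact Set.mul_mem_mul (by simp) (Set.mem_union_right _ ⟨1, rfl⟩)
  | succ k =>
    rw [show (2^(k+1) + 2 : ℕ) = 2 * (2^k + 1) by ring]
    exact Set.mul_mem_mul (by simp) (Set.mem_union_right _ ⟨k, rfl⟩)

theorem Hle3_decomposition :
    {n : ℕ | ∃ l : List ℕ, 1 ≤ l.length ∧ l.length ≤ 3 ∧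
        (∀ u ∈ l, ∃ a : ℕ, u = 2 ^ a) ∧ l.Pairwise Nat.Coprime ∧ n = l.sum}
      = ({1, 2} : Set ℕ) *
        ({n : ℕ | ∃ β : ℕ, n = 2 ^ β} ∪ {n : ℕ | ∃ β : ℕ, n = 2 ^ β + 1}) := by
  ext n
  constructor
  · rintro ⟨l, h1, h3, hpow, hcop, rfl⟩
    rcases l with _ | ⟨u, _ | ⟨v, _ | ⟨w, _ | rest⟩⟩⟩
    · simp at h1
    · obtain ⟨a, rfl⟩ := hpow u (by simp)
      simpa using mem_rhs_pow a
    · obtain ⟨a, rfl⟩ := hpow u (by simp)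
      obtain ⟨b, rfl⟩ := hpow v (by simp)
      simp only [List.pairwise_cons, List.mem_cons, List.mem_singleton] at hcop
      have hab := hcop.1 _ (Or.inl rfl)
      rcases pow2_coprime hab with h | h
      · subst h
        simpa [add_comm] using mem_rhs_succ b
      · subst h
        simpa using mem_rhs_succ a
    · obtain ⟨a, rfl⟩ := hpow u (by simp)
      obtain ⟨b, rfl⟩ := hpow v (by simp)
      obtain ⟨c, rfl⟩ := hpow w (by simp)
      simp only [List.pairwise_cons, List.mem_cons, List.mem_singleton,
        List.not_mem_nil] at hcop
      have hab := hcop.1 _ (Or.inl rfl)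
      have hac := hcop.1 _ (Or.inr (Or.inl rfl))
      have hbc := hcop.2.1 _ (Or.inl rfl)
      rcases pow2_coprime hab with h | h
      · subst h
        rcases pow2_coprime hbc with h' | h'
        · subst h'
          have h2 := mem_rhs_plus2 c
          simp only [List.sum_cons, List.sum_nil]
          convert h2 using 1
          all_goals ring
        · subst h'
          have h2 := mem_rhs_plus2 b
          simp only [List.sum_cons, List.sum_nil]
          convert h2 using 1
          all_goals ring
      · subst h
        rcases pow2_coprime hac with h' | h'
        · subst h'
          have h2 := mem_rhs_plus2 c
          simp only [List.sum_cons, List.sum_nil]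
          convert h2 using 1
          all_goals ring
        · subst h'
          have h2 := mem_rhs_plus2 a
          simp only [List.sum_cons, List.sum_nil]
          convert h2 using 1
          all_goals ring
    · simp at h3; omega
  · rintro ⟨x, hx, y, hy, rfl⟩
    rcases hx with rfl | rfl
    · rcases hy with ⟨β, rfl⟩ | ⟨β, rfl⟩
      · exact ⟨[2^β], by simp, by simp, by intro u hu; simp only [List.mem_singleton] at hu; exact ⟨β, hu⟩,
          by simp, by simp⟩
      · refine ⟨[2^β, 1], by simp, by simp, ?_, ?_, by simp⟩
        · intro u hu
          simp only [List.mem_cons, List.mem_singleton, List.not_mem_nil, or_false] at hu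
          rcases hu with rfl | rfl
          · exact ⟨β, rfl⟩
          · exact ⟨0, rfl⟩
        · simp [Nat.coprime_one_right]
    · rcases hy with ⟨β, rfl⟩ | ⟨β, rfl⟩
      · exact ⟨[2^(β+1)], by simp, by simp,
          by intro u hu; simp only [List.mem_singleton] at hu; exact ⟨β+1, hu⟩,
          by simp, by simp [pow_succ]; ring⟩
      · refine ⟨[2^(β+1), 1, 1], by simp, by simp, ?_, ?_, by simp [pow_succ]; ring⟩
        · intro u hu
          simp only [List.mem_cons, List.mem_singleton, List.not_mem_nil, or_false] at hu
          rcases hu with rfl | rfl | rfl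
          · exact ⟨β+1, rfl⟩
          · exact ⟨0, rfl⟩
          · exact ⟨0, rfl⟩
        · simp [Nat.coprime_one_right, Nat.coprime_one_left]
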